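/- Let X be a set, let t be a {∘, 1, D}-term over variables Σ, and let f assign to each variable in Σ a binary relation on X. Then for any x, y ∈ X the following are equivalent: (1) the pair (x, y) belongs to the relational interpretation of t under f; (2) there is a homomorphism of the tree ⟨t⟩ (viewed as a relational structure) into (X, f) mapping the root of ⟨t⟩ to x and the point of ⟨t⟩ to y. -/

import Mathlib

inductive PreTree (α : Type) : Type
  | node : Bool → List (α × PreTree α) → PreTree α

namespace PreTree

variable {α : Type}

def mark : PreTree α → Bool
  | node b _ => b

def children : PreTree α → List (α × PreTree α)
  | node _ cs => cs

def le : PreTree α → PreTree α → Prop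
  | node b₁ c₁, node b₂ c₂ =>
      (b₂ = true → b₁ = true) ∧
      ∀ q, q ∈ c₂ → ∃ p, p ∈ c₁ ∧ p.1 = q.1 ∧ le p.2 q.2
termination_by _ t₂ => sizeOf t₂
decreasing_by
  have h := List.sizeOf_lt_of_mem ‹q ∈ c₂›
  obtain ⟨qa, qt⟩ := q
  simp at h ⊢
  omega

-- The reduced form of a tree: reduce all child subtrees, then for each
-- label keep only the `≤`-minimal attached subtrees.
open scoped Classical in
noncomputable def reduce : PreTree α → PreTree α
  | node b cs =>
      let cs' : List (α × PreTree α) := cs.attach.map fun p => (p.1.1, reduce p.1.2)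
      node b (cs'.filter fun q =>
        decide (∀ q' ∈ cs', q'.1 = q.1 → le q'.2 q.2 → le q.2 q'.2))
termination_by t => sizeOf t
decreasing_by
  have h := List.sizeOf_lt_of_mem p.2
  obtain ⟨⟨pa, pt⟩, hp⟩ := p
  simp at h ⊢
  omega

/-- A tree is reduced if it equals its reduced form. -/
def Reduced (T : PreTree α) : Prop := reduce T = T

/-- The number of marked (point) vertices of a tree. -/
def markCount : PreTree α → ℕ
  | node b cs => (cond b 1 0) + (cs.attach.map fun p => markCount p.1.2).sum
termination_by t => sizeOf t
decreasing_by
  have h := List.sizeOf_lt_of_mem p.2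
  obtain ⟨⟨pa, pt⟩, hp⟩ := p
  simp at h ⊢
  omega

/-- A pointed tree: exactly one vertex is marked as the point. -/
def Pointed (T : PreTree α) : Prop := markCount T = 1

/-- Remove all point marks. -/
def unmark : PreTree α → PreTree α
  | node _ cs => node false (cs.attach.map fun p => (p.1.1, unmark p.1.2))
termination_by t => sizeOf t
decreasing_by
  have h := List.sizeOf_lt_of_mem p.2
  obtain ⟨⟨pa, pt⟩, hp⟩ := p
  simp at h ⊢
  omega

/-- Graft the tree `S` onto the point of `T` (identifying the point of `T`
with the root of `S`); the marks of `S` determine the new point. -/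
def graft (S : PreTree α) : PreTree α → PreTree α
  | node b cs =>
      if b then node S.mark (cs ++ S.children)
      else node b (cs.attach.map fun p => (p.1.1, graft S p.1.2))
termination_by t => sizeOf t
decreasing_by
  have h := List.sizeOf_lt_of_mem p.2
  obtain ⟨⟨pa, pt⟩, hp⟩ := p
  simp at h ⊢
  omega

/-- Move the point of `T` to its root. -/
def pointAtRoot (T : PreTree α) : PreTree α := node true (unmark T).children

/-- Pointed tree concatenation `T ∘ S`. -/
noncomputable def concat (T S : PreTree α) : PreTree α := reduce (graft S T)

/-- The domain operation `D(T)` on pointed trees. -/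
noncomputable def domTree (T : PreTree α) : PreTree α := reduce (pointAtRoot T)

/-- The trivial pointed tree: one vertex, both root and point. -/
def trivialTree : PreTree α := node true []

/-- The two-vertex pointed tree with a single `a`-labelled edge, point at the child. -/
def arrow (a : α) : PreTree α := node false [(a, node true [])]


/-- Set-theoretic equality of trees (children lists regarded as sets). -/
def eqv : PreTree α → PreTree α → Prop
  | node b₁ c₁, node b₂ c₂ =>
      b₁ = b₂ ∧
      (∀ p, p ∈ c₁ → ∃ q, q ∈ c₂ ∧ p.1 = q.1 ∧ eqv p.2 q.2) ∧
      (∀ q, q ∈ c₂ → ∃ p : {x // x ∈ c₁}, p.1.1 = q.1 ∧ eqv p.1.2 q.2)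
termination_by t₁ _ => sizeOf t₁
decreasing_by
  · have h₁ := List.sizeOf_lt_of_mem ‹p ∈ c₁›
    obtain ⟨pa, pt⟩ := p
    simp at h₁ ⊢
    omega
  · have h₁ := List.sizeOf_lt_of_mem p.2
    obtain ⟨⟨pa, pt⟩, hp⟩ := p
    simp at h₁ ⊢
    omega


/-- The subtree of `T` at position `p` (a list of child indices), if it exists. -/
def subAt : List ℕ → PreTree α → Option (PreTree α)
  | [], t => some t
  | i :: is, node _ cs => (cs[i]?).bind fun p => subAt is p.2

/-- `p` is a vertex of `T`. -/
def IsVertex (T : PreTree α) (p : List ℕ) : Prop := ∃ t, subAt p T = some t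

/-- The vertex `p` of `T` is the point (is marked). -/
def IsPoint (T : PreTree α) (p : List ℕ) : Prop :=
  ∃ t, subAt p T = some t ∧ t.mark = true

/-- There is an `a`-labelled edge of `T` from vertex `p` (the parent) to
vertex `q` (the child). -/
def Edge (T : PreTree α) (a : α) (p q : List ℕ) : Prop :=
  ∃ c, subAt p T = some c ∧ ∃ i t, c.children[i]? = some (a, t) ∧ q = p ++ [i]

theorem root_isVertex (T : PreTree α) : IsVertex T [] := ⟨T, rfl⟩

/-- A homomorphism of pointed labelled rooted trees from `S` to `T`:
a map of vertices preserving the labelled edge relations, sending the root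
to the root and points to points. -/
def HomTree (S T : PreTree α) : Prop :=
  ∃ θ : List ℕ → List ℕ,
    θ [] = [] ∧
    (∀ p, IsVertex S p → IsVertex T (θ p)) ∧
    (∀ a p q, Edge S a p q → Edge T a (θ p) (θ q)) ∧
    (∀ p, IsPoint S p → IsPoint T (θ p))

/-- A homomorphism of the pointed tree `T`, viewed as a relational structure,
into the relational structure `(X, f)`, mapping the root of `T` to `x` and
the point of `T` to `y`. -/
def HomInto {X : Type} (T : PreTree α) (f : α → X → X → Prop) (x y : X) : Prop :=
  ∃ θ : List ℕ → X,
    θ [] = x ∧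
    (∀ a p q, Edge T a p q → f a (θ p) (θ q)) ∧
    (∀ p, IsPoint T p → θ p = y)


end PreTree

namespace FreeKAD

/-- Terms of the signature `{∘, 1, D}`. -/
inductive Term1 (α : Type) : Type
  | var : α → Term1 α
  | one : Term1 α
  | comp : Term1 α → Term1 α → Term1 α
  | dom : Term1 α → Term1 α

/-- Terms of the signature `{∘, +, *, 0, 1, D}` (Kleene algebra with domain). -/
inductive TermK (α : Type) : Type
  | var : α → TermK α
  | zero : TermK α
  | one : TermK α
  | comp : TermK α → TermK α → TermK α
  | add : TermK α → TermK α → TermK α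
  | star : TermK α → TermK α
  | dom : TermK α → TermK α

variable {α : Type}

/-- The relational interpretation of a `{∘, 1, D}`-term over a set `X`,
under an assignment `f` of binary relations on `X` to the variables. -/
def rinterp1 {X : Type} (f : α → X → X → Prop) : Term1 α → X → X → Prop
  | .var a => f a
  | .one => fun x y => x = y
  | .comp s t => fun x y => ∃ z, rinterp1 f s x z ∧ rinterp1 f t z y
  | .dom s => fun x y => x = y ∧ ∃ z, rinterp1 f s x z

/-- The relational interpretation of a `{∘, +, *, 0, 1, D}`-term over a set `X`,
under an assignment `f` of binary relations on `X` to the variables. -/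
def rinterpK {X : Type} (f : α → X → X → Prop) : TermK α → X → X → Prop
  | .var a => f a
  | .zero => fun _ _ => False
  | .one => fun x y => x = y
  | .comp s t => fun x y => ∃ z, rinterpK f s x z ∧ rinterpK f t z y
  | .add s t => fun x y => rinterpK f s x y ∨ rinterpK f t x y
  | .star s => Relation.ReflTransGen (rinterpK f s)
  | .dom s => fun x y => x = y ∧ ∃ z, rinterpK f s x z

/-- Composition of binary relations. -/
def relComp {X : Type} (R S : X → X → Prop) : X → X → Prop :=
  fun x y => ∃ z, R x z ∧ S z y

/-- Union of binary relations. -/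
def relUnion {X : Type} (R S : X → X → Prop) : X → X → Prop :=
  fun x y => R x y ∨ S x y

/-- The domain operation on binary relations. -/
def relDom {X : Type} (R : X → X → Prop) : X → X → Prop :=
  fun x y => x = y ∧ ∃ z, R x z

/-- The identity relation. -/
def relId {X : Type} : X → X → Prop := fun x y => x = y

/-- The empty relation. -/
def relEmpty {X : Type} : X → X → Prop := fun _ _ => False

end FreeKAD

namespace FreeKAD

open PreTree

variable {α : Type}

/-- The single-tree interpretation of `{∘, 1, D}`-terms. -/
noncomputable def interp1 : Term1 α → PreTree α
  | .var a => arrow a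
  | .one => trivialTree
  | .comp s t => concat (interp1 s) (interp1 t)
  | .dom s => domTree (interp1 s)

/-- The set of `≤`-maximal elements of a set of trees. -/
def maximalSet (K : Set (PreTree α)) : Set (PreTree α) :=
  {T | T ∈ K ∧ ∀ S ∈ K, le T S → le S T}

/-- Elementwise lifting of pointed tree concatenation to sets of trees. -/
def liftComp (K L : Set (PreTree α)) : Set (PreTree α) :=
  {U | ∃ T ∈ K, ∃ S ∈ L, U = concat T S}

/-- Elementwise lifting of the domain operation to sets of trees. -/
def liftDom (K : Set (PreTree α)) : Set (PreTree α) :=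
  {U | ∃ T ∈ K, U = domTree T}

/-- Iterated lifted concatenation: `K^0 = {trivial}`, `K^(i+1) = K^i ∘ K`. -/
def powC (K : Set (PreTree α)) : ℕ → Set (PreTree α)
  | 0 => {trivialTree}
  | i + 1 => liftComp (powC K i) K

/-- The standard tree interpretation of `{∘, +, *, 0, 1, D}`-terms. -/
def sinterp : TermK α → Set (PreTree α)
  | .var a => {arrow a}
  | .zero => ∅
  | .one => {trivialTree}
  | .comp s t => maximalSet (liftComp (sinterp s) (sinterp t))
  | .add s t => maximalSet (sinterp s ∪ sinterp t)
  | .star s => maximalSet (⋃ i : ℕ, powC (sinterp s) (i + 1))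
  | .dom s => maximalSet (liftDom (sinterp s))

/-- Equality of sets of trees, with trees compared as (hereditarily finite) sets. -/
def SetEqv (K L : Set (PreTree α)) : Prop :=
  (∀ T ∈ K, ∃ S ∈ L, eqv T S) ∧ (∀ S ∈ L, ∃ T ∈ K, eqv T S)

/-- A set of reduced pointed trees is regular if it is the standard tree
interpretation of some `{∘, +, *, 0, 1, D}`-term. -/
def Regular (L : Set (PreTree α)) : Prop := ∃ t : TermK α, L = sinterp t

/-- The set of reduced trees lying `≤`-below some member of `L`. -/
def down (L : Set (PreTree α)) : Set (PreTree α) :=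
  {T | Reduced T ∧ ∃ S ∈ L, le T S}

end FreeKAD

namespace FreeKAD
open PreTree

variable {α X : Type}

theorem attach_map_gen {β γ : Type*} (cs : List β) (g : β → γ) :
    (cs.attach.map fun p => g p.1) = cs.map g := by
  rw [show (fun p : {x // x ∈ cs} => g p.1) = g ∘ Subtype.val from rfl, ← List.map_map,
    List.attach_map_subtype_val]

theorem attach_map_pair (cs : List (α × PreTree α)) (g : PreTree α → PreTree α) :
    (cs.attach.map fun p => (p.1.1, g p.1.2)) = cs.map fun p => (p.1, g p.2) := by
  rw [show (fun (p : {x // x ∈ cs}) => (p.1.1, g p.1.2))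
      = (fun p : α × PreTree α => (p.1, g p.2)) ∘ Subtype.val from rfl,
    ← List.map_map, List.attach_map_subtype_val]

theorem attach_map_snd {γ : Type*} (cs : List (α × PreTree α)) (g : PreTree α → γ) :
    (cs.attach.map fun p => g p.1.2) = cs.map fun p => g p.2 := by
  rw [show (fun (p : {x // x ∈ cs}) => g p.1.2)
      = (fun p : α × PreTree α => g p.2) ∘ Subtype.val from rfl,
    ← List.map_map, List.attach_map_subtype_val]

theorem le_node {b₁ b₂ : Bool} {c₁ c₂ : List (α × PreTree α)} :
    le (.node b₁ c₁) (.node b₂ c₂) ↔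
      ((b₂ = true → b₁ = true) ∧ ∀ q ∈ c₂, ∃ p ∈ c₁, p.1 = q.1 ∧ le p.2 q.2) := by
  rw [le]

theorem mark_node (b : Bool) (cs : List (α × PreTree α)) :
    mark (PreTree.node b cs) = b := rfl

theorem children_node (b : Bool) (cs : List (α × PreTree α)) :
    children (PreTree.node b cs) = cs := rfl

open scoped Classical in
theorem reduce_node (b : Bool) (cs : List (α × PreTree α)) :
    reduce (.node b cs) =
      .node b (((cs.map fun p => (p.1, reduce p.2))).filter fun q =>
        decide (∀ q' ∈ (cs.map fun p => (p.1, reduce p.2)),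
          q'.1 = q.1 → le q'.2 q.2 → le q.2 q'.2)) := by
  rw [reduce]
  simp only [attach_map_pair]
  congr!

theorem graft_node_true (S : PreTree α) (cs : List (α × PreTree α)) :
    graft S (.node true cs) = .node S.mark (cs ++ S.children) := by
  rw [graft]; rw [if_pos rfl]

theorem graft_node_false (S : PreTree α) (cs : List (α × PreTree α)) :
    graft S (.node false cs) = .node false (cs.map fun p => (p.1, graft S p.2)) := by
  rw [graft]; simp [attach_map_pair]

theorem unmark_node (b : Bool) (cs : List (α × PreTree α)) :
    unmark (.node b cs) = .node false (cs.map fun p => (p.1, unmark p.2)) := by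
  rw [unmark]; simp only [attach_map_pair]

/-- custom induction principle -/
theorem ind {motive : PreTree α → Prop} (T : PreTree α)
    (h : ∀ b cs, (∀ a t, (a, t) ∈ cs → motive t) → motive (.node b cs)) : motive T :=
  match T with
  | .node b cs => h b cs fun a t ht => ind t h
termination_by sizeOf T
decreasing_by
  have h₁ := List.sizeOf_lt_of_mem ht
  simp at h₁ ⊢
  omega

/-- Recursive satisfaction predicate: `Hs f P T x` says there is a labelling of the
vertices of `T` starting with `x` at the root, respecting edges via `f`, with every
marked vertex's value satisfying `P`. -/
def Hs (f : α → X → X → Prop) (P : X → Prop) : PreTree α → X → Prop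
  | .node b cs, x =>
      (b = true → P x) ∧ ∀ p ∈ cs.attach, ∃ z, f p.1.1 x z ∧ Hs f P p.1.2 z
termination_by T _ => sizeOf T
decreasing_by
  have h := List.sizeOf_lt_of_mem p.2
  obtain ⟨⟨pa, pt⟩, hp⟩ := p
  simp at h ⊢
  omega

theorem Hs_node {f : α → X → X → Prop} {P : X → Prop} {b : Bool}
    {cs : List (α × PreTree α)} {x : X} :
    Hs f P (.node b cs) x ↔
      ((b = true → P x) ∧ ∀ p ∈ cs, ∃ z, f p.1 x z ∧ Hs f P p.2 z) := by
  rw [Hs]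
  constructor
  · rintro ⟨h1, h2⟩
    exact ⟨h1, fun p hp => h2 ⟨p, hp⟩ (List.mem_attach _ _)⟩
  · rintro ⟨h1, h2⟩
    exact ⟨h1, fun p _ => h2 p.1 p.2⟩

/-- Number of marked vertices (a clean clone of `markCount`). -/
def pts : PreTree α → ℕ
  | .node b cs => (cond b 1 0) + (cs.attach.map fun p => pts p.1.2).sum
termination_by T => sizeOf T
decreasing_by
  have h := List.sizeOf_lt_of_mem p.2
  obtain ⟨⟨pa, pt⟩, hp⟩ := p
  simp at h ⊢
  omega

theorem pts_node (b : Bool) (cs : List (α × PreTree α)) :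
    pts (.node b cs) = (cond b 1 0) + (cs.map fun p => pts p.2).sum := by
  rw [pts, attach_map_snd]

theorem mem_le_sum {l : List ℕ} {a : ℕ} (h : a ∈ l) : a ≤ l.sum := by
  induction l with
  | nil => cases h
  | cons b t ih =>
    rcases List.mem_cons.mp h with rfl | h'
    · simp
    · have := ih h'; simp; omega

theorem two_mem_le_sum {β : Type*} (g : β → ℕ) {l : List β} {a b : β}
    (ha : a ∈ l) (hb : b ∈ l) (hne : a ≠ b) : g a + g b ≤ (l.map g).sum := by
  induction l with
  | nil => cases ha
  | cons c t ih =>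
    rcases List.mem_cons.mp ha with rfl | ha'
    · have hb' : b ∈ t := by
        rcases List.mem_cons.mp hb with rfl | hb'
        · exact absurd rfl hne
        · exact hb'
      have := mem_le_sum (List.mem_map_of_mem (f := g) hb')
      simp; omega
    · rcases List.mem_cons.mp hb with rfl | hb'
      · have := mem_le_sum (List.mem_map_of_mem (f := g) ha')
        simp; omega
      · have := ih ha' hb'
        simp; omega

theorem sum_pos_exists {β : Type*} (g : β → ℕ) {l : List β}
    (h : 1 ≤ (l.map g).sum) : ∃ a ∈ l, 1 ≤ g a := by
  induction l with
  | nil => simp at h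
  | cons c t ih =>
    simp at h
    by_cases hc : 1 ≤ g c
    · exact ⟨c, List.mem_cons_self, hc⟩
    · have : 1 ≤ (t.map g).sum := by omega
      obtain ⟨a, ha, hga⟩ := ih this
      exact ⟨a, List.mem_cons_of_mem _ ha, hga⟩

theorem sum_filter_map_eq {β : Type*} (p : β → Bool) (g : β → ℕ) :
    ∀ l : List β, (∀ a ∈ l, p a = false → g a = 0) →
      ((l.filter p).map g).sum = (l.map g).sum := by
  intro l
  induction l with
  | nil => simp
  | cons c t ih =>
    intro h
    have ht := ih fun a ha => h a (List.mem_cons_of_mem _ ha)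
    cases hc : p c with
    | true => simp [List.filter_cons, hc, ht]
    | false =>
      have := h c (List.mem_cons_self) hc
      simp [List.filter_cons, hc, ht, this]

theorem filter_length_le {β : Type*} (p q : β → Bool) :
    ∀ l : List β, (∀ a ∈ l, p a = true → q a = true) →
      (l.filter p).length ≤ (l.filter q).length := by
  intro l
  induction l with
  | nil => simp
  | cons c t ih =>
    intro h
    have ht := ih fun a ha => h a (List.mem_cons_of_mem _ ha)
    cases hc : p c with
    | true =>
      have := h c (List.mem_cons_self) hc
      simp [List.filter_cons, hc, this]; omega
    | false =>
      cases hqc : q c <;> simp [List.filter_cons, hc, hqc] <;> omega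

theorem filter_length_lt {β : Type*} (p q : β → Bool) (l : List β)
    (hsub : ∀ a ∈ l, p a = true → q a = true) (a : β) (ha : a ∈ l)
    (hpa : p a = false) (hqa : q a = true) :
    (l.filter p).length < (l.filter q).length := by
  induction l with
  | nil => cases ha
  | cons c t ih =>
    have hsub' : ∀ x ∈ t, p x = true → q x = true :=
      fun x hx => hsub x (List.mem_cons_of_mem _ hx)
    rcases List.mem_cons.mp ha with rfl | ha'
    · have := filter_length_le p q t hsub'
      simp [List.filter_cons, hpa, hqa]; omega
    · have := ih hsub' ha'
      cases hc : p c with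
      | true =>
        have := hsub c (List.mem_cons_self) hc
        simp [List.filter_cons, hc, this]; omega
      | false =>
        cases hqc : q c <;> simp [List.filter_cons, hc, hqc] <;> omega

theorem le_refl' : ∀ T : PreTree α, le T T := by
  intro T
  induction T using ind with
  | h b cs IH =>
    rw [le_node]
    exact ⟨id, fun q hq => ⟨q, hq, rfl, by
      have := IH q.1 q.2 (by simpa using hq)
      exact this⟩⟩

theorem le_trans' : ∀ T₃ T₂ T₁ : PreTree α, le T₁ T₂ → le T₂ T₃ → le T₁ T₃ := by
  intro T₃
  induction T₃ using ind with
  | h b₃ c₃ IH =>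
    intro T₂ T₁ h12 h23
    obtain ⟨b₂, c₂⟩ := T₂
    obtain ⟨b₁, c₁⟩ := T₁
    rw [le_node] at h12 h23 ⊢
    refine ⟨fun hb => h12.1 (h23.1 hb), fun q hq => ?_⟩
    obtain ⟨p₂, hp₂, hlab₂, hle₂⟩ := h23.2 q hq
    obtain ⟨p₁, hp₁, hlab₁, hle₁⟩ := h12.2 p₂ hp₂
    exact ⟨p₁, hp₁, hlab₁.trans hlab₂,
      IH q.1 q.2 (by simpa using hq) p₂.2 p₁.2 hle₁ hle₂⟩

open scoped Classical in
theorem exists_min (l : List (α × PreTree α)) :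
    ∀ (n : ℕ) (q : α × PreTree α), q ∈ l →
      (l.filter fun z => decide (z.1 = q.1 ∧ le z.2 q.2)).length ≤ n →
      ∃ m ∈ l, m.1 = q.1 ∧ le m.2 q.2 ∧
        ∀ m' ∈ l, m'.1 = m.1 → le m'.2 m.2 → le m.2 m'.2 := by
  intro n
  induction n with
  | zero =>
    intro q hq hlen
    exfalso
    have hqmem : q ∈ l.filter fun z => decide (z.1 = q.1 ∧ le z.2 q.2) := by
      rw [List.mem_filter]
      exact ⟨hq, by simp [le_refl']⟩
    have := List.length_pos_iff.mpr (List.ne_nil_of_mem hqmem)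
    omega
  | succ n ih =>
    intro q hq hlen
    by_cases hmin : ∀ m' ∈ l, m'.1 = q.1 → le m'.2 q.2 → le q.2 m'.2
    · exact ⟨q, hq, rfl, le_refl' _, hmin⟩
    · push_neg at hmin
      obtain ⟨m', hm'l, hlab, hle, hnot⟩ := hmin
      have hlt : (l.filter fun z => decide (z.1 = m'.1 ∧ le z.2 m'.2)).length <
          (l.filter fun z => decide (z.1 = q.1 ∧ le z.2 q.2)).length := by
        apply filter_length_lt _ _ l ?_ q hq
        · simp only [decide_eq_false_iff_not, not_and]
          intro _
          exact hnot
        · simp [le_refl']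
        · intro a _ hpa
          simp only [decide_eq_true_eq] at hpa ⊢
          exact ⟨hpa.1.trans hlab, le_trans' _ _ _ hpa.2 hle⟩
      obtain ⟨m, hml, hmlab, hmle, hmmin⟩ := ih m' hm'l (by omega)
      exact ⟨m, hml, hmlab.trans hlab, le_trans' _ _ _ hmle hle, hmmin⟩

theorem hs_mono {f : α → X → X → Prop} {P : X → Prop} :
    ∀ T S : PreTree α, le S T → ∀ x, Hs f P S x → Hs f P T x := by
  intro T
  induction T using ind with
  | h b₂ c₂ IH =>
    intro S hle x hS
    obtain ⟨b₁, c₁⟩ := S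
    rw [le_node] at hle
    rw [Hs_node] at hS ⊢
    refine ⟨fun hb => hS.1 (hle.1 hb), fun q hq => ?_⟩
    obtain ⟨p, hp, hlab, hpq⟩ := hle.2 q hq
    obtain ⟨z, hfz, hz⟩ := hS.2 p hp
    exact ⟨z, hlab ▸ hfz, IH q.1 q.2 (by simpa using hq) p.2 hpq z hz⟩

open scoped Classical in
theorem le_reduce_both : ∀ T : PreTree α, le (reduce T) T ∧ le T (reduce T) := by
  intro T
  induction T using ind with
  | h b cs IH =>
    rw [reduce_node]
    set cs' := cs.map fun p => (p.1, reduce p.2) with hcs'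
    constructor
    · rw [le_node]
      refine ⟨id, fun q hq => ?_⟩
      have hq' : (q.1, reduce q.2) ∈ cs' := by
        rw [hcs', List.mem_map]; exact ⟨q, hq, rfl⟩
      obtain ⟨m, hm, hmlab, hmle, hmmin⟩ := exists_min cs' _ (q.1, reduce q.2) hq' le_rfl
      refine ⟨m, ?_, hmlab, ?_⟩
      · rw [List.mem_filter]
        refine ⟨hm, ?_⟩
        simp only [decide_eq_true_eq]
        exact hmmin
      · refine le_trans' _ _ _ hmle ?_
        exact (IH q.1 q.2 (by simpa using hq)).1
    · rw [le_node]
      refine ⟨id, fun q hq => ?_⟩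
      have hq1 : q ∈ cs' := List.mem_of_mem_filter hq
      rw [hcs', List.mem_map] at hq1
      obtain ⟨p, hp, rfl⟩ := hq1
      exact ⟨p, hp, rfl, (IH p.1 p.2 (by simpa using hp)).2⟩

theorem hs_reduce {f : α → X → X → Prop} {P : X → Prop} (T : PreTree α) (x : X) :
    Hs f P (reduce T) x ↔ Hs f P T x :=
  ⟨hs_mono T (reduce T) (le_reduce_both T).1 x,
   hs_mono (reduce T) T (le_reduce_both T).2 x⟩

theorem le_pts : ∀ B A : PreTree α, le A B → 1 ≤ pts B → 1 ≤ pts A := by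
  intro B
  induction B using ind with
  | h b₂ c₂ IH =>
    intro A hle hpt
    obtain ⟨b₁, c₁⟩ := A
    rw [le_node] at hle
    rw [pts_node] at hpt ⊢
    by_cases hb : b₂ = true
    · have := hle.1 hb; subst this; simp
    · have hb2 : (cond b₂ 1 0 : ℕ) = 0 := by
        cases b₂; rfl; exact absurd rfl hb
      rw [hb2] at hpt
      simp only [Nat.zero_add] at hpt
      obtain ⟨v, hv, hv1⟩ := sum_pos_exists _ hpt
      obtain ⟨p, hp, _, hple⟩ := hle.2 v hv
      have h1 : 1 ≤ pts p.2 := IH v.1 v.2 (by simpa using hv) p.2 hple (by simpa using hv1)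
      have h2 : pts p.2 ≤ (c₁.map fun p => pts p.2).sum := by
        simpa using mem_le_sum (List.mem_map_of_mem (f := fun p : α × PreTree α => pts p.2) hp)
      omega

theorem pts_child_le (b : Bool) (cs : List (α × PreTree α)) {p : α × PreTree α}
    (hp : p ∈ cs) : pts p.2 ≤ pts (.node b cs) := by
  rw [pts_node]
  have h2 : pts p.2 ≤ (cs.map fun p => pts p.2).sum := by
    simpa using mem_le_sum (List.mem_map_of_mem (f := fun p : α × PreTree α => pts p.2) hp)
  omega

open scoped Classical in
theorem pts_reduce : ∀ T : PreTree α, pts T ≤ 1 → pts (reduce T) = pts T := by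
  intro T
  induction T using ind with
  | h b cs IH =>
    intro hT
    rw [reduce_node, pts_node, pts_node]
    set cs' := cs.map fun p => (p.1, reduce p.2) with hcs'
    have hchild : ∀ p ∈ cs, pts (reduce p.2) = pts p.2 := by
      intro p hp
      exact IH p.1 p.2 (by simpa using hp)
        (le_trans (pts_child_le b cs hp) hT)
    have hmapeq : (cs'.map fun q => pts q.2) = cs.map fun p => pts p.2 := by
      rw [hcs', List.map_map]
      exact List.map_congr_left fun p hp => hchild p hp
    rw [pts_node] at hT
    have hsum_le : (cs'.map fun q => pts q.2).sum ≤ 1 := by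
      rw [hmapeq]
      omega
    congr 1
    rw [← hmapeq]
    apply sum_filter_map_eq
    intro q hq hfq
    by_contra hne
    have hq1 : 1 ≤ pts q.2 := by omega
    simp only [decide_eq_false_iff_not, not_forall] at hfq
    obtain ⟨q', hq', hlab, hle', hnle⟩ := hfq
    have hq'1 : 1 ≤ pts q'.2 := le_pts _ _ hle' hq1
    have hqq' : q ≠ q' := by
      rintro rfl
      exact hnle (le_refl' _)
    have h3 : pts q.2 + pts q'.2 ≤ (cs'.map fun q => pts q.2).sum := by
      simpa using two_mem_le_sum (fun q : α × PreTree α => pts q.2) hq hq' hqq'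
    omega

theorem pts_unmark : ∀ T : PreTree α, pts (unmark T) = 0 := by
  intro T
  induction T using ind with
  | h b cs IH =>
    rw [unmark_node, pts_node]
    simp only [cond_false, Nat.zero_add, List.map_map]
    rw [List.sum_eq_zero_iff]
    intro a ha
    simp only [List.mem_map, Function.comp] at ha
    obtain ⟨p, hp, rfl⟩ := ha
    exact IH p.1 p.2 (by simpa using hp)

theorem graft_of_pts_zero (S : PreTree α) : ∀ T : PreTree α, pts T = 0 → graft S T = T := by
  intro T
  induction T using ind with
  | h b cs IH =>
    intro hT
    rw [pts_node] at hT
    have hb : b = false := by cases b; rfl; simp at hT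
    subst hb
    rw [graft_node_false]
    have hz : ∀ p ∈ cs, pts p.2 = 0 := by
      intro p hp
      have h1 : pts p.2 ≤ (cs.map fun p => pts p.2).sum := by
        simpa using mem_le_sum (List.mem_map_of_mem (f := fun p : α × PreTree α => pts p.2) hp)
      omega
    have heq : (cs.map fun p => (p.1, graft S p.2)) = cs.map id := by
      apply List.map_congr_left
      intro p hp
      rw [IH p.1 p.2 (by simpa using hp) (hz p hp)]
      simp
    rw [heq, List.map_id]

theorem hs_irrel {f : α → X → X → Prop} {P Q : X → Prop} :
    ∀ T : PreTree α, pts T = 0 → ∀ x, (Hs f P T x ↔ Hs f Q T x) := by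
  intro T
  induction T using ind with
  | h b cs IH =>
    intro hT x
    rw [pts_node] at hT
    have hb : b = false := by cases b; rfl; simp at hT
    subst hb
    have hz : ∀ p ∈ cs, pts p.2 = 0 := by
      intro p hp
      have h1 : pts p.2 ≤ (cs.map fun p => pts p.2).sum := by
        simpa using mem_le_sum (List.mem_map_of_mem (f := fun p : α × PreTree α => pts p.2) hp)
      omega
    rw [Hs_node, Hs_node]
    simp only [Bool.false_eq_true, false_implies, true_and]
    constructor
    · intro h q hq
      obtain ⟨z, hfz, hz'⟩ := h q hq
      exact ⟨z, hfz, (IH q.1 q.2 (by simpa using hq) (hz q hq) z).mp hz'⟩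
    · intro h q hq
      obtain ⟨z, hfz, hz'⟩ := h q hq
      exact ⟨z, hfz, (IH q.1 q.2 (by simpa using hq) (hz q hq) z).mpr hz'⟩

theorem pts_graft {S : PreTree α} (hS : pts S = 1) :
    ∀ T : PreTree α, pts (graft S T) = pts T := by
  intro T
  induction T using ind with
  | h b cs IH =>
    cases b with
    | true =>
      obtain ⟨sb, scs⟩ := S
      rw [graft_node_true, pts_node, pts_node]
      rw [pts_node] at hS
      simp only [mark_node, children_node, List.map_append, List.sum_append]
      cases sb <;> simp only [cond_true, cond_false] at hS ⊢ <;> omega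
    | false =>
      rw [graft_node_false, pts_node, pts_node, List.map_map]
      congr 1
      refine congr_arg List.sum (List.map_congr_left ?_)
      intro p hp
      simpa using IH p.1 p.2 (by simpa using hp)

theorem hs_graft {f : α → X → X → Prop} {P : X → Prop} (S : PreTree α) :
    ∀ T : PreTree α, pts T = 1 → ∀ x,
      (Hs f P (graft S T) x ↔ Hs f (fun z => Hs f P S z) T x) := by
  intro T
  induction T using ind with
  | h b cs IH =>
    intro hT x
    cases b with
    | true =>
      rw [pts_node] at hT
      have hsum : (cs.map fun p => pts p.2).sum = 0 := by simpa using hT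
      have hz : ∀ p ∈ cs, pts p.2 = 0 := by
        intro p hp
        have h1 : pts p.2 ≤ (cs.map fun p => pts p.2).sum := by
          simpa using mem_le_sum (List.mem_map_of_mem (f := fun p : α × PreTree α => pts p.2) hp)
        omega
      obtain ⟨sb, scs⟩ := S
      rw [graft_node_true]
      simp only [mark_node, children_node]
      rw [Hs_node, Hs_node]
      simp only [List.mem_append]
      constructor
      · rintro ⟨h1, h2⟩
        refine ⟨fun _ => ?_, fun q hq => ?_⟩
        · rw [Hs_node]
          exact ⟨h1, fun q hq => h2 q (Or.inr hq)⟩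
        · obtain ⟨z, hfz, hz'⟩ := h2 q (Or.inl hq)
          exact ⟨z, hfz, (hs_irrel q.2 (hz q hq) z).mp hz'⟩
      · rintro ⟨h1, h2⟩
        have h1' := h1 (by simp)
        rw [Hs_node] at h1'
        refine ⟨h1'.1, fun q hq => ?_⟩
        rcases hq with hq | hq
        · obtain ⟨z, hfz, hz'⟩ := h2 q hq
          exact ⟨z, hfz, (hs_irrel q.2 (hz q hq) z).mpr hz'⟩
        · exact h1'.2 q hq
    | false =>
      rw [pts_node] at hT
      have hsum : (cs.map fun p => pts p.2).sum = 1 := by simpa using hT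
      rw [graft_node_false, Hs_node, Hs_node]
      simp only [Bool.false_eq_true, false_implies, true_and]
      have key : ∀ q ∈ cs, ∀ z, (Hs f P (graft S q.2) z ↔ Hs f (fun z => Hs f P S z) q.2 z) := by
        intro q hq z
        have hle : pts q.2 ≤ 1 := by
          have h1 : pts q.2 ≤ (cs.map fun p => pts p.2).sum := by
            simpa using mem_le_sum (List.mem_map_of_mem (f := fun p : α × PreTree α => pts p.2) hq)
          omega
        rcases Nat.le_one_iff_eq_zero_or_eq_one.mp hle with h0 | h1
        · rw [graft_of_pts_zero S q.2 h0]
          exact hs_irrel q.2 h0 z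
        · exact IH q.1 q.2 (by simpa using hq) h1 z
      constructor
      · intro h q hq
        obtain ⟨z, hfz, hz'⟩ := by
          have := h (q.1, graft S q.2) (List.mem_map_of_mem hq)
          simpa using this
        exact ⟨z, hfz, (key q hq z).mp hz'⟩
      · intro h q hq
        rw [List.mem_map] at hq
        obtain ⟨p, hp, rfl⟩ := hq
        obtain ⟨z, hfz, hz'⟩ := h p hp
        exact ⟨z, hfz, (key p hp z).mpr hz'⟩

theorem hs_unmark_top {f : α → X → X → Prop} :
    ∀ T : PreTree α, ∀ x,
      (Hs f (fun _ => True) (unmark T) x ↔ Hs f (fun _ => True) T x) := by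
  intro T
  induction T using ind with
  | h b cs IH =>
    intro x
    rw [unmark_node, Hs_node, Hs_node]
    simp only [Bool.false_eq_true, false_implies, true_and, implies_true]
    constructor
    · intro h q hq
      obtain ⟨z, hfz, hz'⟩ := by
        have := h (q.1, unmark q.2) (List.mem_map_of_mem hq)
        simpa using this
      refine ⟨z, hfz, (IH q.1 q.2 (by simpa using hq) z).mp hz'⟩
    · intro h q hq
      rw [List.mem_map] at hq
      obtain ⟨p, hp, rfl⟩ := hq
      obtain ⟨z, hfz, hz'⟩ := h p hp
      exact ⟨z, hfz, (IH p.1 p.2 (by simpa using hp) z).mpr hz'⟩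

theorem hs_pointAtRoot {f : α → X → X → Prop} {P : X → Prop} (T : PreTree α) (x : X) :
    Hs f P (pointAtRoot T) x ↔ P x ∧ Hs f (fun _ => True) T x := by
  obtain ⟨b, cs⟩ := T
  have hpr : pointAtRoot (PreTree.node b cs)
      = PreTree.node true (cs.map fun p => (p.1, unmark p.2)) := by
    rw [show pointAtRoot (PreTree.node b cs)
        = PreTree.node true (unmark (PreTree.node b cs)).children from rfl,
      unmark_node, children_node]
  have key : ∀ p ∈ cs, ∀ z : X,
      Hs f P (unmark p.2) z ↔ Hs f (fun _ => True) p.2 z := fun p _ z =>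
    (hs_irrel (unmark p.2) (pts_unmark p.2) z).trans (hs_unmark_top p.2 z)
  rw [hpr, Hs_node, Hs_node]
  simp only [implies_true, true_and, true_implies]
  constructor
  · rintro ⟨h1, hc⟩
    refine ⟨h1, fun p hp => ?_⟩
    obtain ⟨z, hfz, hz'⟩ := by
      have := hc (p.1, unmark p.2) (List.mem_map_of_mem hp)
      simpa using this
    exact ⟨z, hfz, (key p hp z).mp hz'⟩
  · rintro ⟨h1, hc⟩
    refine ⟨h1, fun q hq => ?_⟩
    rw [List.mem_map] at hq
    obtain ⟨p, hp, rfl⟩ := hq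
    obtain ⟨z, hfz, hz'⟩ := hc p hp
    exact ⟨z, hfz, (key p hp z).mpr hz'⟩

theorem pts_interp1 : ∀ t : Term1 α, pts (interp1 t) = 1 := by
  intro t
  induction t with
  | var a =>
    show pts (arrow a) = 1
    rw [show arrow a = PreTree.node false [(a, PreTree.node true [])] from rfl]
    rw [pts_node]
    simp [pts_node]
  | one =>
    show pts trivialTree = 1
    rw [show trivialTree = PreTree.node true ([] : List (α × PreTree α)) from rfl, pts_node]
    simp
  | comp s t ihs iht =>
    show pts (concat (interp1 s) (interp1 t)) = 1
    rw [show concat (interp1 s) (interp1 t) = reduce (graft (interp1 t) (interp1 s)) from rfl]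
    rw [pts_reduce _ (by rw [pts_graft iht]; omega), pts_graft iht, ihs]
  | dom s ihs =>
    show pts (domTree (interp1 s)) = 1
    rw [show domTree (interp1 s) = reduce (pointAtRoot (interp1 s)) from rfl]
    have hpr : pts (pointAtRoot (interp1 s)) = 1 := by
      obtain ⟨b, cs⟩ := interp1 s
      rw [show pointAtRoot (PreTree.node b cs)
          = PreTree.node true (unmark (PreTree.node b cs)).children from rfl,
        unmark_node, children_node, pts_node]
      have h0 : pts (unmark (PreTree.node b cs)) = 0 := pts_unmark _
      rw [unmark_node, pts_node] at h0
      simp only [cond_false, Nat.zero_add] at h0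
      simp only [cond_true, List.map_map]
      rw [← List.map_map] at *
      omega
    rw [pts_reduce _ (by omega), hpr]

theorem hs_interp1 {f : α → X → X → Prop} :
    ∀ (t : Term1 α) (P : X → Prop) (x : X),
      Hs f P (interp1 t) x ↔ ∃ y, rinterp1 f t x y ∧ P y := by
  intro t
  induction t with
  | var a =>
    intro P x
    show Hs f P (arrow a) x ↔ _
    rw [show arrow a = PreTree.node false [(a, PreTree.node true [])] from rfl, Hs_node]
    simp only [Bool.false_eq_true, false_implies, true_and, List.mem_singleton]
    constructor
    · intro h
      obtain ⟨z, hfz, hz⟩ := h (a, PreTree.node true []) rfl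
      rw [Hs_node] at hz
      exact ⟨z, hfz, hz.1 rfl⟩
    · rintro ⟨y, hfy, hPy⟩
      rintro q rfl
      exact ⟨y, hfy, by rw [Hs_node]; simp [hPy]⟩
  | one =>
    intro P x
    show Hs f P trivialTree x ↔ _
    rw [show trivialTree = PreTree.node true ([] : List (α × PreTree α)) from rfl, Hs_node]
    simp only [List.not_mem_nil, false_implies, implies_true, and_true, true_implies]
    constructor
    · intro h; exact ⟨x, rfl, h⟩
    · rintro ⟨y, rfl, hPy⟩; exact hPy
  | comp s t ihs iht =>
    intro P x
    show Hs f P (concat (interp1 s) (interp1 t)) x ↔ _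
    rw [show concat (interp1 s) (interp1 t) = reduce (graft (interp1 t) (interp1 s)) from rfl,
      hs_reduce, hs_graft (interp1 t) (interp1 s) (pts_interp1 s) x, ihs]
    constructor
    · rintro ⟨z, hsz, hz⟩
      rw [iht] at hz
      obtain ⟨y, hty, hPy⟩ := hz
      exact ⟨y, ⟨z, hsz, hty⟩, hPy⟩
    · rintro ⟨y, ⟨z, hsz, hty⟩, hPy⟩
      exact ⟨z, hsz, (iht P z).mpr ⟨y, hty, hPy⟩⟩
  | dom s ihs =>
    intro P x
    show Hs f P (domTree (interp1 s)) x ↔ _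
    rw [show domTree (interp1 s) = reduce (pointAtRoot (interp1 s)) from rfl,
      hs_reduce, hs_pointAtRoot]
    rw [ihs (fun _ => True) x]
    constructor
    · rintro ⟨hPx, z, hsz, -⟩
      exact ⟨x, ⟨rfl, z, hsz⟩, hPx⟩
    · rintro ⟨y, ⟨rfl, z, hsz⟩, hPy⟩
      exact ⟨hPy, z, hsz, trivial⟩

theorem subAt_nil (T : PreTree α) : subAt [] T = some T := rfl

theorem subAt_cons (i : ℕ) (is : List ℕ) (b : Bool) (cs : List (α × PreTree α)) :
    subAt (i :: is) (.node b cs) = (cs[i]?).bind fun p => subAt is p.2 := rfl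

theorem subAt_append :
    ∀ (p : List ℕ) (T c : PreTree α), subAt p T = some c →
      ∀ q, subAt (p ++ q) T = subAt q c := by
  intro p
  induction p with
  | nil =>
    intro T c h q
    rw [subAt_nil] at h
    cases h
    rfl
  | cons i is ih =>
    intro T c h q
    obtain ⟨b, cs⟩ := T
    rw [subAt_cons] at h
    rw [List.cons_append, subAt_cons]
    obtain ⟨pr, hpr, hsub⟩ := Option.bind_eq_some_iff.mp h
    rw [hpr, Option.bind_some] at h ⊢
    exact ih pr.2 c h q

open scoped Classical in
/-- Choice-based vertex labelling extracted from an `Hs` witness. -/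
noncomputable def pick (f : α → X → X → Prop) (P : X → Prop) :
    List ℕ → PreTree α → X → X
  | [], _, x => x
  | i :: p, T, x =>
      match T.children[i]? with
      | some (a, c) =>
          pick f P p c (if h : ∃ z, f a x z ∧ Hs f P c z then h.choose else x)
      | none => x

theorem pick_nil {f : α → X → X → Prop} {P : X → Prop} (T : PreTree α) (x : X) :
    pick f P [] T x = x := rfl

open scoped Classical in
theorem pick_cons_some {f : α → X → X → Prop} {P : X → Prop} {T : PreTree α}
    {i : ℕ} {a : α} {c : PreTree α} (h : T.children[i]? = some (a, c))
    (p : List ℕ) (x : X) :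
    pick f P (i :: p) T x =
      pick f P p c (if h : ∃ z, f a x z ∧ Hs f P c z then h.choose else x) := by
  rw [pick, h]

theorem pick_append {f : α → X → X → Prop} {P : X → Prop} :
    ∀ (p : List ℕ) (T c : PreTree α), subAt p T = some c →
      ∀ (q : List ℕ) (x : X),
        pick f P (p ++ q) T x = pick f P q c (pick f P p T x) := by
  intro p
  induction p with
  | nil =>
    intro T c h q x
    rw [subAt_nil] at h
    cases h
    rfl
  | cons i is ih =>
    intro T c h q x
    obtain ⟨b, cs⟩ := T
    rw [subAt_cons] at h
    obtain ⟨pr, hpr, hsub⟩ := Option.bind_eq_some_iff.mp h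
    obtain ⟨a, c'⟩ := pr
    have hpr' : (PreTree.node b cs).children[i]? = some (a, c') := hpr
    rw [List.cons_append, pick_cons_some hpr', pick_cons_some hpr']
    exact ih c' c hsub q _

theorem hs_pick {f : α → X → X → Prop} {P : X → Prop} :
    ∀ (p : List ℕ) (T c : PreTree α), subAt p T = some c →
      ∀ x, Hs f P T x → Hs f P c (pick f P p T x) := by
  intro p
  induction p with
  | nil =>
    intro T c h x hT
    rw [subAt_nil] at h
    cases h
    exact hT
  | cons i is ih =>
    intro T c h x hT
    obtain ⟨b, cs⟩ := T
    rw [subAt_cons] at h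
    obtain ⟨pr, hpr, hsub⟩ := Option.bind_eq_some_iff.mp h
    obtain ⟨a, c'⟩ := pr
    have hpr' : (PreTree.node b cs).children[i]? = some (a, c') := hpr
    rw [pick_cons_some hpr']
    have hmem : (a, c') ∈ cs := by
      have := List.mem_iff_getElem?.mpr ⟨i, hpr⟩
      exact this
    have hex : ∃ z, f a x z ∧ Hs f P c' z := by
      rw [Hs_node] at hT
      exact hT.2 (a, c') hmem
    rw [dif_pos hex]
    exact ih c' c hsub _ hex.choose_spec.2

theorem pick_edge {f : α → X → X → Prop} {P : X → Prop} {T : PreTree α} {x : X}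
    (hT : Hs f P T x) {a : α} {p q : List ℕ} (he : Edge T a p q) :
    f a (pick f P p T x) (pick f P q T x) := by
  obtain ⟨c, hc, i, t, hchild, rfl⟩ := he
  rw [pick_append p T c hc [i] x]
  set z := pick f P p T x with hz
  have hcz : Hs f P c z := hs_pick p T c hc x hT
  obtain ⟨b, cs⟩ := c
  have hmem : (a, t) ∈ cs := List.mem_iff_getElem?.mpr ⟨i, hchild⟩
  have hex : ∃ z', f a z z' ∧ Hs f P t z' := by
    rw [Hs_node] at hcz
    exact hcz.2 (a, t) hmem
  rw [pick_cons_some hchild, dif_pos hex, pick_nil]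
  exact hex.choose_spec.1

theorem pick_point {f : α → X → X → Prop} {P : X → Prop} {T : PreTree α} {x : X}
    (hT : Hs f P T x) {p : List ℕ} (hp : IsPoint T p) : P (pick f P p T x) := by
  obtain ⟨c, hc, hmark⟩ := hp
  have hcz : Hs f P c (pick f P p T x) := hs_pick p T c hc x hT
  obtain ⟨b, cs⟩ := c
  rw [mark_node] at hmark
  subst hmark
  rw [Hs_node] at hcz
  exact hcz.1 rfl

theorem hom_of_hs {f : α → X → X → Prop} {P : X → Prop} {T : PreTree α} {x : X}
    (hT : Hs f P T x) :
    ∃ θ : List ℕ → X, θ [] = x ∧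
      (∀ a p q, Edge T a p q → f a (θ p) (θ q)) ∧
      (∀ p, IsPoint T p → P (θ p)) :=
  ⟨fun p => pick f P p T x, pick_nil T x,
    fun _ _ _ he => pick_edge hT he, fun _ hp => pick_point hT hp⟩

theorem hs_of_hom {f : α → X → X → Prop} {P : X → Prop} {T : PreTree α}
    (θ : List ℕ → X)
    (hedge : ∀ a p q, Edge T a p q → f a (θ p) (θ q))
    (hpt : ∀ p, IsPoint T p → P (θ p)) :
    ∀ (T₀ : PreTree α) (p : List ℕ), subAt p T = some T₀ → Hs f P T₀ (θ p) := by
  intro T₀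
  induction T₀ using ind with
  | h b cs IH =>
    intro p hsub
    rw [Hs_node]
    constructor
    · intro hb
      exact hpt p ⟨.node b cs, hsub, by rw [mark_node, hb]⟩
    · intro q hq
      obtain ⟨i, hi⟩ := List.mem_iff_getElem?.mp hq
      have hedge' : Edge T q.1 p (p ++ [i]) :=
        ⟨.node b cs, hsub, i, q.2, by rw [children_node]; simpa using hi, rfl⟩
      have hsub' : subAt (p ++ [i]) T = some q.2 := by
        rw [subAt_append p T _ hsub [i], subAt_cons, hi, Option.bind_some, subAt_nil]
      exact ⟨θ (p ++ [i]), hedge _ _ _ hedge',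
        IH q.1 q.2 (by simpa using hq) (p ++ [i]) hsub'⟩
/-- Let `X` be a set, `t` a `{∘, 1, D}`-term over variables
`Σ`, and `f` an assignment of binary relations on `X` to the variables. Then
for any `x, y ∈ X`: the pair `(x, y)` belongs to the relational
interpretation of `t` under `f` iff there is a homomorphism of the tree
`⟨t⟩` (viewed as a relational structure) into `(X, f)` mapping the root of
`⟨t⟩` to `x` and the point of `⟨t⟩` to `y`. -/
theorem rinterp1_iff_homInto {α X : Type} (f : α → X → X → Prop)
    (t : Term1 α) (x y : X) :
    rinterp1 f t x y ↔ HomInto (interp1 t) f x y := by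
  constructor
  · intro hr
    have hs : Hs f (fun z => z = y) (interp1 t) x :=
      (hs_interp1 t (fun z => z = y) x).mpr ⟨y, hr, rfl⟩
    obtain ⟨θ, hroot, hedge, hpt⟩ := hom_of_hs hs
    exact ⟨θ, hroot, hedge, hpt⟩
  · rintro ⟨θ, hroot, hedge, hpt⟩
    have hs : Hs f (fun z => z = y) (interp1 t) x := by
      have := hs_of_hom (P := fun z => z = y) θ hedge hpt (interp1 t) [] (subAt_nil _)
      rwa [hroot] at this
    obtain ⟨y', hry', rfl⟩ := (hs_interp1 t (fun z => z = y) x).mp hs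
    exact hry'


end FreeKAD
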